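/- Direct sum bound: if there exists a rank-ρ_1-saturating [n_1,k_1]_{q^m/q} system and a rank-ρ_2-saturating [n_2,k_2]_{q^m/q} system, and ρ_1 + ρ_2 ≤ min{k_1+k_2, m}, then s_{q^m/q}(k_1+k_2, ρ_1+ρ_2) ≤ s_{q^m/q}(k_1,ρ_1) + s_{q^m/q}(k_2,ρ_2). More precisely, for any F_{q^m}-linear map f: F_{q^m}^{n_1} → F_{q^m}^{n_2}, the f-sum of the two systems is an [n_1+n_2, k_1+k_2]_{q^m/q} system that is rank-ρ-saturating for some ρ ≤ ρ_1 + ρ_2. -/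

import Mathlib

open Matrix

/-- `U` covers with radius `r`: every vector of `F_{q^m}^k` lies in the `F_{q^m}`-span
of an `F_q`-subspace of `U` of `F_q`-dimension at most `r`. -/
def RkCovers (K : Type*) {L : Type*} [Field K] [Field L] [Algebra K L]
    {ι : Type*} (U : Submodule K (ι → L)) (r : ℕ) : Prop :=
  ∀ v : ι → L, ∃ S : Submodule K (ι → L), S ≤ U ∧ Module.finrank K S ≤ r ∧
    v ∈ Submodule.span L (S : Set (ι → L))

/-- `U` is rank-`ρ`-saturating: it covers with radius `ρ` and `ρ` is minimal. -/
def IsRankSat (K : Type*) {L : Type*} [Field K] [Field L] [Algebra K L]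
    {ι : Type*} (U : Submodule K (ι → L)) (ρ : ℕ) : Prop :=
  RkCovers K U ρ ∧ ∀ r < ρ, ¬ RkCovers K U r

/-- `s_{q^m/q}(k, ρ)`: the minimal `F_q`-dimension of a rank-`ρ`-saturating
`[n,k]_{q^m/q}` system in `F_{q^m}^k`. -/
noncomputable def sMin (K L : Type*) [Field K] [Field L] [Algebra K L] (k ρ : ℕ) : ℕ :=
  sInf {n : ℕ | ∃ U : Submodule K (Fin k → L),
    Module.finrank K U = n ∧ Submodule.span L (U : Set (Fin k → L)) = ⊤ ∧
      IsRankSat K U ρ}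

section Aux

variable {K L : Type*} [Field K] [Field L] [Algebra K L]

theorem FSA.moduleFinite_of_finite (R M : Type*) [Semiring R] [AddCommMonoid M] [Module R M]
    [Finite M] : Module.Finite R M := by
  cases nonempty_fintype M
  exact ⟨⟨Finset.univ, by simp⟩⟩

theorem FSA.finrank_span_range_le {M : Type*} [AddCommGroup M] [Module K M] {η : Type*}
    [Fintype η] (f : η → M) :
    Module.finrank K (Submodule.span K (Set.range f)) ≤ Fintype.card η := by
  classical
  refine (finrank_span_le_card (R := K) (Set.range f)).trans ?_
  rw [Set.toFinset_range]
  exact Finset.card_image_le.trans (by simp)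

theorem FSA.rkCovers_mono_r {ι : Type*} {U : Submodule K (ι → L)} {r r' : ℕ}
    (h : RkCovers K U r) (hrr : r ≤ r') : RkCovers K U r' := by
  intro v
  obtain ⟨S, h1, h2, h3⟩ := h v
  exact ⟨S, h1, h2.trans hrr, h3⟩

theorem FSA.rkCovers_of_families {ι η : Type*} [Fintype η]
    {U : Submodule K (ι → L)} {r : ℕ} (hcard : Fintype.card η ≤ r)
    (H : ∀ v : ι → L, ∃ f : η → (ι → L), (∀ i, f i ∈ U) ∧ v ∈ Submodule.span L (Set.range f)) :
    RkCovers K U r := by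
  intro v
  obtain ⟨f, hfU, hv⟩ := H v
  refine ⟨Submodule.span K (Set.range f), ?_, ?_, ?_⟩
  · rw [Submodule.span_le]
    rintro x ⟨i, rfl⟩
    exact hfU i
  · exact (FSA.finrank_span_range_le f).trans hcard
  · rw [Submodule.span_span_of_tower]
    exact hv

theorem FSA.span_range_coe_basis {M : Type*} [AddCommGroup M] [Module K M]
    (S : Submodule K M) {η : Type*} (bS : Module.Basis η K ↥S) :
    Submodule.span K (Set.range fun j => (bS j : M)) = S := by
  have h1 : (Set.range fun j => (bS j : M)) = S.subtype '' Set.range bS := by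
    rw [← Set.range_comp]; rfl
  rw [h1, ← Submodule.map_span, bS.span_eq, Submodule.map_top, Submodule.range_subtype]

theorem FSA.exists_family_of_rkCovers {ι : Type*} [Fintype ι] [Fintype L]
    {U : Submodule K (ι → L)} {r : ℕ} (h : RkCovers K U r) (v : ι → L) :
    ∃ f : Fin r → (ι → L), (∀ i, f i ∈ U) ∧ v ∈ Submodule.span L (Set.range f) := by
  haveI : Module.Finite K (ι → L) := FSA.moduleFinite_of_finite K _
  obtain ⟨S, hSU, hSr, hv⟩ := h v
  let bS := Module.finBasis K ↥S
  let f₀ : Fin (Module.finrank K ↥S) → (ι → L) := fun i => (bS i : ι → L)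
  have hspan₀ : Submodule.span K (Set.range f₀) = S := FSA.span_range_coe_basis S bS
  let f : Fin r → (ι → L) := fun i =>
    if h : (i : ℕ) < Module.finrank K ↥S then f₀ ⟨i, h⟩ else 0
  refine ⟨f, ?_, ?_⟩
  · intro i
    by_cases hi : (i : ℕ) < Module.finrank K ↥S
    · simpa [f, hi] using hSU (bS ⟨i, hi⟩).2
    · simp [f, hi]
  · have h1 : v ∈ Submodule.span L (Set.range f₀) := by
      have h2 := Submodule.span_span_of_tower (R := K) (S := L) (Set.range f₀)
      rw [hspan₀] at h2
      rw [← h2]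
      exact hv
    refine Submodule.span_mono ?_ h1
    rintro x ⟨j, rfl⟩
    refine ⟨⟨(j : ℕ), lt_of_lt_of_le j.2 hSr⟩, ?_⟩
    simp [f, j.2]

theorem FSA.exists_isRankSat_le {ι : Type*} {U : Submodule K (ι → L)} {r : ℕ}
    (h : RkCovers K U r) : ∃ ρ ≤ r, IsRankSat K U ρ := by
  have hne : {n : ℕ | RkCovers K U n}.Nonempty := ⟨r, h⟩
  exact ⟨sInf {n : ℕ | RkCovers K U n}, Nat.sInf_le h, Nat.sInf_mem hne,
    fun s hs => Nat.notMem_of_lt_sInf hs⟩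

end Aux

section Step

variable {K L : Type*} [Field K] [Field L] [Algebra K L]

theorem FSA.rkCovers_step {ι : Type*} [Fintype ι] [Fintype L]
    (X' : Submodule K (ι → L)) (tl y : ι → L) (lam : L) (hy : y ∈ X') {r : ℕ}
    (h : RkCovers K (X' ⊔ Submodule.span K {tl + lam • y}) r) :
    RkCovers K (X' ⊔ Submodule.span K {tl}) (r + 1) := by
  classical
  apply FSA.rkCovers_of_families (η := Fin r ⊕ Fin 1) (by simp)
  intro v
  obtain ⟨g, hgU, hgv⟩ := FSA.exists_family_of_rkCovers h v
  rw [Submodule.mem_span_range_iff_exists_fun] at hgv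
  obtain ⟨mu, hmu⟩ := hgv
  have hdec : ∀ s, ∃ x ∈ X', ∃ a : K, g s = x + a • (tl + lam • y) := by
    intro s
    obtain ⟨x, hx, z, hz, hxz⟩ := Submodule.mem_sup.mp (hgU s)
    obtain ⟨a, rfl⟩ := Submodule.mem_span_singleton.mp hz
    exact ⟨x, hx, a, hxz.symm⟩
  choose x hx a ha using hdec
  refine ⟨Sum.elim (fun s => x s + a s • tl) (fun _ => y), ?_, ?_⟩
  · rintro (s | s)
    · exact Submodule.add_mem _ (Submodule.mem_sup_left (hx s))
        (Submodule.smul_mem _ _ (Submodule.mem_sup_right (Submodule.subset_span rfl)))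
    · exact Submodule.mem_sup_left hy
  · rw [Submodule.mem_span_range_iff_exists_fun]
    refine ⟨Sum.elim mu (fun _ => ∑ s, mu s * (algebraMap K L (a s) * lam)), ?_⟩
    rw [Fintype.sum_sum_type]
    simp only [Sum.elim_inl, Sum.elim_inr]
    rw [← hmu]
    have hterm : ∀ s, mu s • g s
        = mu s • (x s + a s • tl) + (mu s * (algebraMap K L (a s) * lam)) • y := by
      intro s
      rw [ha s]
      have h1 : a s • (tl + lam • y) = a s • tl + (algebraMap K L (a s) * lam) • y := by
        rw [smul_add, ← algebraMap_smul L (a s) (lam • y), smul_smul]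
      rw [h1, ← add_assoc, smul_add, smul_smul]
    calc ∑ s, mu s • (x s + a s • tl) +
          ∑ _ : Fin 1, (∑ s, mu s * (algebraMap K L (a s) * lam)) • y
        = ∑ s, mu s • (x s + a s • tl) + (∑ s, mu s * (algebraMap K L (a s) * lam)) • y := by
          rw [Fin.sum_univ_one]
      _ = ∑ s, (mu s • (x s + a s • tl) + (mu s * (algebraMap K L (a s) * lam)) • y) := by
          rw [Finset.sum_add_distrib, Finset.sum_smul]
      _ = ∑ s, mu s • g s := by
          refine Finset.sum_congr rfl fun s _ => ?_
          rw [hterm s]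

end Step

section Achieve

variable {K L : Type*} [Field K] [Field L] [Algebra K L]

theorem FSA.exists_isRankSat_of_rkCovers {ι : Type*} [Fintype ι] [Fintype L]
    {ρ : ℕ} (hρ1 : 1 ≤ ρ) (hρk : ρ ≤ Fintype.card ι) (hρm : ρ ≤ Module.finrank K L)
    (Y : Submodule K (ι → L)) (hYcov : RkCovers K Y ρ)
    (hYspan : Submodule.span L (Y : Set (ι → L)) = ⊤) :
    ∃ Z : Submodule K (ι → L), Module.finrank K Z ≤ Module.finrank K Y ∧
      Submodule.span L (Z : Set (ι → L)) = ⊤ ∧ IsRankSat K Z ρ := by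
  classical
  haveI : Module.Finite K L := FSA.moduleFinite_of_finite K L
  haveI : Module.Finite K (ι → L) := FSA.moduleFinite_of_finite K _
  obtain ⟨t, htY, htsp, htli⟩ := exists_linearIndependent L (Y : Set (ι → L))
  rw [hYspan] at htsp
  haveI : Fintype ↥t := (Set.toFinite t).fintype
  have hbtop : ⊤ ≤ Submodule.span L (Set.range ((↑) : ↥t → (ι → L))) := by
    rw [Subtype.range_coe]
    exact htsp.ge
  let b : Module.Basis ↥t L (ι → L) := Module.Basis.mk htli hbtop
  have hbcoe : ∀ τ : ↥t, b τ = (τ : ι → L) := fun τ => Module.Basis.mk_apply htli hbtop τ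
  set N := Fintype.card ↥t with hN
  have hρN : ρ ≤ N := by
    have h1 : Module.finrank L (ι → L) = N := Module.finrank_eq_card_basis b
    have h2 : Module.finrank L (ι → L) = Fintype.card ι :=
      Module.finrank_eq_card_basis (Pi.basisFun L ι)
    omega
  set B : Submodule K (ι → L) := Submodule.span K t with hB
  have hBY : B ≤ Y := Submodule.span_le.mpr htY
  have htB : ∀ τ : ↥t, (τ : ι → L) ∈ B := fun τ => Submodule.subset_span τ.2
  have hBspanL : Submodule.span L (B : Set (ι → L)) = ⊤ := by
    rw [hB, Submodule.span_span_of_tower, htsp]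
  -- hard vector
  let σ : Fin ρ → ↥t := fun i => (Fintype.equivFin ↥t).symm (Fin.castLE hρN i)
  have hσinj : Function.Injective σ := by
    intro i j hij
    have := (Fintype.equivFin ↥t).symm.injective hij
    exact Fin.castLE_injective hρN this
  let c : Fin ρ → L := fun i => Module.finBasis K L (Fin.castLE hρm i)
  have hcli : LinearIndependent K c :=
    (Module.finBasis K L).linearIndependent.comp _ (Fin.castLE_injective hρm)
  let vstar : ι → L := ∑ i, c i • (σ i : ι → L)
  have hreprτ : ∀ τ : ↥t, b.repr (τ : ι → L) = Finsupp.single τ 1 := by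
    intro τ
    rw [← hbcoe τ, b.repr_self]
  -- hard bound for B
  have hard : ∀ r, r < ρ → ¬ RkCovers K B r := by
    intro r hr hcovr
    obtain ⟨g, hgB, hgv⟩ := FSA.exists_family_of_rkCovers hcovr vstar
    rw [Submodule.mem_span_range_iff_exists_fun] at hgv
    obtain ⟨lam, hlam⟩ := hgv
    have hmem : ∀ s, g s ∈ Submodule.span K (Set.range ((↑) : ↥t → (ι → L))) := by
      intro s
      rw [Subtype.range_coe]
      exact hgB s
    choose d hd using fun s => (Submodule.mem_span_range_iff_exists_fun K).mp (hmem s)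
    have hrepr_g : ∀ s, ∀ τ₀ : ↥t, b.repr (g s) τ₀ = algebraMap K L (d s τ₀) := by
      intro s τ₀
      rw [← hd s]
      have : (∑ τ, d s τ • (τ : ι → L)) = ∑ τ, (algebraMap K L (d s τ)) • (τ : ι → L) := by
        refine Finset.sum_congr rfl fun τ _ => ?_
        rw [algebraMap_smul]
      rw [this, map_sum]
      have : ∀ τ : ↥t, b.repr ((algebraMap K L (d s τ)) • (τ : ι → L))
          = (algebraMap K L (d s τ)) • Finsupp.single τ 1 := by
        intro τ
        rw [_root_.map_smul, hreprτ]
      rw [Finset.sum_congr rfl fun τ _ => this τ]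
      rw [Finsupp.finset_sum_apply]
      simp only [Finsupp.smul_apply, Finsupp.single_apply, smul_eq_mul, mul_ite, mul_one, mul_zero]
      rw [Finset.sum_ite_eq' Finset.univ τ₀ (fun τ => algebraMap K L (d s τ))]
      simp
    have hrepr_v : ∀ i₀ : Fin ρ, b.repr vstar (σ i₀) = c i₀ := by
      intro i₀
      show b.repr (∑ i, c i • (σ i : ι → L)) (σ i₀) = c i₀
      rw [map_sum]
      have : ∀ i, b.repr (c i • (σ i : ι → L)) = c i • Finsupp.single (σ i) 1 := by
        intro i
        rw [_root_.map_smul, hreprτ]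
      rw [Finset.sum_congr rfl fun i _ => this i, Finsupp.finset_sum_apply]
      simp only [Finsupp.smul_apply, Finsupp.single_apply, smul_eq_mul, mul_ite, mul_one, mul_zero]
      have : ∀ i, (if σ i = σ i₀ then c i else 0) = (if i = i₀ then c i else 0) := by
        intro i
        congr 1
        simp [hσinj.eq_iff]
      rw [Finset.sum_congr rfl fun i _ => this i]
      rw [Finset.sum_ite_eq' Finset.univ i₀ c]
      simp
    have key : ∀ i₀ : Fin ρ, c i₀ = ∑ s, d s (σ i₀) • lam s := by
      intro i₀
      rw [← hrepr_v i₀, ← hlam, map_sum, Finsupp.finset_sum_apply]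
      refine Finset.sum_congr rfl fun s _ => ?_
      rw [_root_.map_smul, Finsupp.smul_apply, hrepr_g s (σ i₀), smul_eq_mul,
        Algebra.smul_def, mul_comm]
    set Λ : Submodule K L := Submodule.span K (Set.range lam) with hΛ
    have hcΛ : ∀ i, c i ∈ Λ := by
      intro i
      rw [key i]
      exact Submodule.sum_mem _ fun s _ =>
        Submodule.smul_mem _ _ (Submodule.subset_span ⟨s, rfl⟩)
    have hli' : LinearIndependent K (fun i => (⟨c i, hcΛ i⟩ : ↥Λ)) := by
      apply LinearIndependent.of_comp Λ.subtype
      exact hcli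
    have hcard := hli'.fintype_card_le_finrank
    have hΛr : Module.finrank K Λ ≤ r := by simpa using FSA.finrank_span_range_le (K := K) lam
    simp only [Fintype.card_fin] at hcard
    omega
  -- every superspace of B covers with N
  have hBcovN : ∀ W : Submodule K (ι → L), B ≤ W → RkCovers K W N := by
    intro W hBW
    apply FSA.rkCovers_of_families (η := ↥t) le_rfl
    intro v
    refine ⟨fun τ => (τ : ι → L), fun τ => hBW (htB τ), ?_⟩
    rw [Subtype.range_coe, htsp]
    exact Submodule.mem_top
  -- core descent step
  have core : ∀ X : Submodule K (ι → L), B ≤ X → RkCovers K X ρ →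
      (∃ Z : Submodule K (ι → L), Module.finrank K Z ≤ Module.finrank K X ∧ B ≤ Z ∧ IsRankSat K Z ρ) ∨
      (∃ X' : Submodule K (ι → L), Module.finrank K X' < Module.finrank K X ∧ B ≤ X' ∧ RkCovers K X' ρ) := by
    intro X hBX hXρ
    have hne : {n : ℕ | RkCovers K X n}.Nonempty := ⟨ρ, hXρ⟩
    have hEmem : RkCovers K X (sInf {n : ℕ | RkCovers K X n}) := Nat.sInf_mem hne
    have hEρ : sInf {n : ℕ | RkCovers K X n} ≤ ρ := Nat.sInf_le hXρ
    rcases eq_or_lt_of_le hEρ with heq | hlt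
    · left
      refine ⟨X, le_rfl, hBX, ?_, ?_⟩
      · rw [← heq]; exact hEmem
      · intro r hr
        have hrs : r < sInf {n : ℕ | RkCovers K X n} := by rw [heq]; exact hr
        exact Nat.notMem_of_lt_sInf hrs
    · -- strictly smaller covering radius: descend
      have hXneB : X ≠ B := by
        rintro rfl
        exact hard _ hlt hEmem
      have hBltX : B < X := lt_of_le_of_ne hBX (Ne.symm hXneB)
      obtain ⟨u, huX, huB⟩ := SetLike.exists_of_lt hBltX
      have hqu : (Submodule.Quotient.mk u : (ι → L) ⧸ B) ≠ 0 := by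
        simpa [Submodule.Quotient.mk_eq_zero] using huB
      obtain ⟨φ₀, hφ₀⟩ : ∃ φ₀ : Module.Dual K ((ι → L) ⧸ B),
          φ₀ (Submodule.Quotient.mk u) ≠ 0 := by
        by_contra hcon
        push_neg at hcon
        exact hqu ((Module.forall_dual_apply_eq_zero_iff K _).mp hcon)
      let φ : (ι → L) →ₗ[K] K := ((φ₀ (Submodule.Quotient.mk u))⁻¹ • φ₀).comp B.mkQ
      have hφu : φ u = 1 := by
        show (φ₀ (Submodule.Quotient.mk u))⁻¹ • φ₀ (B.mkQ u) = 1
        rw [Submodule.mkQ_apply, smul_eq_mul]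
        exact inv_mul_cancel₀ hφ₀
      have hφB : ∀ w ∈ B, φ w = 0 := by
        intro w hw
        show (φ₀ (Submodule.Quotient.mk u))⁻¹ • φ₀ (B.mkQ w) = 0
        rw [Submodule.mkQ_apply, (Submodule.Quotient.mk_eq_zero B).mpr hw, map_zero, smul_zero]
      set X' : Submodule K (ι → L) := X ⊓ LinearMap.ker φ with hX'def
      have hBX' : B ≤ X' := le_inf hBX (fun w hw => LinearMap.mem_ker.mpr (hφB w hw))
      have hX'X : X' ≤ X := inf_le_left
      have huX' : u ∉ X' := by
        intro hu
        have := LinearMap.mem_ker.mp hu.2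
        rw [hφu] at this
        exact one_ne_zero this
      have hXX' : X' < X := lt_of_le_of_ne hX'X (fun h => huX' (h ▸ huX))
      have hfrlt : Module.finrank K X' < Module.finrank K X :=
        Submodule.finrank_lt_finrank_of_lt hXX'
      have hXsup : X = X' ⊔ Submodule.span K {u} := by
        apply le_antisymm
        · intro z hz
          have h1 : z - φ z • u ∈ X' := by
            refine ⟨X.sub_mem hz (X.smul_mem _ huX), LinearMap.mem_ker.mpr ?_⟩
            rw [map_sub, _root_.map_smul, hφu, smul_eq_mul, mul_one, sub_self]
          have h2 : z = (z - φ z • u) + φ z • u := by abel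
          rw [h2]
          exact Submodule.add_mem _ (Submodule.mem_sup_left h1)
            (Submodule.mem_sup_right (Submodule.smul_mem _ _ (Submodule.subset_span rfl)))
        · exact sup_le hX'X ((Submodule.span_singleton_le_iff_mem _ _).mpr huX)
      -- tails
      let eN : Fin N ≃ ↥t := (Fintype.equivFin ↥t).symm
      let lamu : Fin N → L := fun l => b.repr u (eN l)
      let yl : Fin N → (ι → L) := fun l => ((eN l : ↥t) : ι → L)
      let T : ℕ → (ι → L) := fun j =>
        ∑ l ∈ Finset.univ.filter (fun l : Fin N => j ≤ (l : ℕ)), lamu l • yl l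
      have hT0 : T 0 = u := by
        show ∑ l ∈ Finset.univ.filter (fun l : Fin N => 0 ≤ (l : ℕ)), lamu l • yl l = u
        rw [Finset.filter_true_of_mem (fun _ _ => Nat.zero_le _)]
        have h3 : ∑ l : Fin N, lamu l • yl l = ∑ τ : ↥t, b.repr u τ • ((τ : ι → L)) :=
          Fintype.sum_equiv eN _ _ (fun l => rfl)
        rw [h3]
        have h4 := b.sum_repr u
        rw [Finset.sum_congr rfl (fun τ _ => by rw [hbcoe τ])] at h4
        exact h4
      have hTN : T N = 0 := by
        show ∑ l ∈ Finset.univ.filter (fun l : Fin N => N ≤ (l : ℕ)), lamu l • yl l = 0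
        rw [Finset.filter_false_of_mem, Finset.sum_empty]
        intro l _
        exact Nat.not_le.mpr l.2
      have hTstep : ∀ (j : ℕ) (hj : j < N),
          T j = T (j + 1) + lamu ⟨j, hj⟩ • yl ⟨j, hj⟩ := by
        intro j hj
        have hsplit : Finset.univ.filter (fun l : Fin N => j ≤ (l : ℕ)) =
            insert (⟨j, hj⟩ : Fin N) (Finset.univ.filter (fun l : Fin N => j + 1 ≤ (l : ℕ))) := by
          ext l
          simp only [Finset.mem_filter, Finset.mem_insert, Finset.mem_univ, true_and,
            Fin.ext_iff]
          omega
        show (∑ l ∈ Finset.univ.filter (fun l : Fin N => j ≤ (l : ℕ)), lamu l • yl l) = _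
        rw [hsplit, Finset.sum_insert (by
          simp only [Finset.mem_filter, Finset.mem_univ, true_and]
          omega)]
        rw [add_comm]
      -- inner loop
      have inner : ∀ j : ℕ, j ≤ N →
          (∃ Z : Submodule K (ι → L), Module.finrank K Z ≤ Module.finrank K X ∧ B ≤ Z ∧ IsRankSat K Z ρ) ∨
          (sInf {n : ℕ | RkCovers K (X' ⊔ Submodule.span K {T j}) n} < ρ) := by
        intro j
        induction j with
        | zero =>
          intro _
          right
          have hW0 : X' ⊔ Submodule.span K {T 0} = X := by rw [hT0, ← hXsup]
          rw [hW0]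
          exact hlt
        | succ j IHj =>
          intro hjN
          rcases IHj (by omega) with hZ | hsml
          · exact Or.inl hZ
          · have hjN' : j < N := by omega
            have hnej : {n : ℕ | RkCovers K (X' ⊔ Submodule.span K {T j}) n}.Nonempty :=
              ⟨N, hBcovN _ (le_trans hBX' le_sup_left)⟩
            have hcovj : RkCovers K (X' ⊔ Submodule.span K {T j})
                (sInf {n : ℕ | RkCovers K (X' ⊔ Submodule.span K {T j}) n}) :=
              Nat.sInf_mem hnej
            have hstep : RkCovers K (X' ⊔ Submodule.span K {T (j+1)})
                (sInf {n : ℕ | RkCovers K (X' ⊔ Submodule.span K {T j}) n} + 1) := by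
              refine FSA.rkCovers_step X' (T (j+1)) (yl ⟨j, hjN'⟩) (lamu ⟨j, hjN'⟩)
                (hBX' (htB _)) ?_
              rw [← hTstep j hjN']
              exact hcovj
            have hle2 : sInf {n : ℕ | RkCovers K (X' ⊔ Submodule.span K {T (j+1)}) n} ≤ ρ := by
              refine le_trans (Nat.sInf_le hstep) ?_
              omega
            rcases eq_or_lt_of_le hle2 with heq2 | hlt2
            · left
              have hnej1 : {n : ℕ | RkCovers K (X' ⊔ Submodule.span K {T (j+1)}) n}.Nonempty :=
                ⟨N, hBcovN _ (le_trans hBX' le_sup_left)⟩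
              refine ⟨X' ⊔ Submodule.span K {T (j+1)}, ?_, le_trans hBX' le_sup_left, ?_, ?_⟩
              · have hsum := Submodule.finrank_sup_add_finrank_inf_eq X'
                  (Submodule.span K {T (j+1)})
                have h1 : Module.finrank K (Submodule.span K ({T (j+1)} : Set (ι → L))) ≤ 1 := by
                  have hrng : ({T (j+1)} : Set (ι → L)) = Set.range (fun _ : Fin 1 => T (j+1)) := by
                    ext z
                    simp [eq_comm]
                  rw [hrng]
                  have := FSA.finrank_span_range_le (K := K) (fun _ : Fin 1 => T (j+1))
                  simpa using this
                omega
              · rw [← heq2]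
                exact Nat.sInf_mem hnej1
              · intro r hr
                have hrs : r < sInf {n : ℕ | RkCovers K (X' ⊔ Submodule.span K {T (j+1)}) n} := by
                  rw [heq2]; exact hr
                exact Nat.notMem_of_lt_sInf hrs
            · exact Or.inr hlt2
      rcases inner N le_rfl with hZ | hsml
      · exact Or.inl hZ
      · right
        refine ⟨X', hfrlt, hBX', ?_⟩
        have hWN : X' ⊔ Submodule.span K {T N} = X' := by
          rw [hTN, Submodule.span_zero_singleton, sup_bot_eq]
        rw [hWN] at hsml
        have hx' : RkCovers K X' (sInf {n : ℕ | RkCovers K X' n}) :=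
          Nat.sInf_mem (⟨N, hBcovN X' hBX'⟩ : {n : ℕ | RkCovers K X' n}.Nonempty)
        exact FSA.rkCovers_mono_r hx' (le_of_lt hsml)
  -- strong induction
  have main : ∀ n (X : Submodule K (ι → L)), Module.finrank K X ≤ n → B ≤ X →
      RkCovers K X ρ →
      ∃ Z : Submodule K (ι → L), Module.finrank K Z ≤ Module.finrank K X ∧ B ≤ Z ∧ IsRankSat K Z ρ := by
    intro n
    induction n with
    | zero =>
      intro X hn hBX hXρ
      rcases core X hBX hXρ with hZ | ⟨X', hlt, _, _⟩
      · exact hZ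
      · omega
    | succ m IH =>
      intro X hn hBX hXρ
      rcases core X hBX hXρ with hZ | ⟨X', hlt, hBX', hcov'⟩
      · exact hZ
      · obtain ⟨Z, h1, h2, h3⟩ := IH X' (by omega) hBX' hcov'
        exact ⟨Z, by omega, h2, h3⟩
  obtain ⟨Z, h1, h2, h3⟩ := main (Module.finrank K Y) Y le_rfl hBY hYcov
  refine ⟨Z, h1, ?_, h3⟩
  have hle : Submodule.span L (B : Set (ι → L)) ≤ Submodule.span L (Z : Set (ι → L)) :=
    Submodule.span_mono h2
  rw [hBspanL] at hle
  exact top_le_iff.mp hle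

end Achieve

section FSum

variable {K L : Type*} [Field K] [Field L] [Algebra K L] [Fintype L]
variable {k₁ k₂ n₁ n₂ : ℕ}
variable (G₁ : Matrix (Fin k₁) (Fin n₁) L) (G₂ : Matrix (Fin k₂) (Fin n₂) L)
variable (G' : Matrix (Fin k₁) (Fin n₂) L)

theorem FSA.fsum_covers {ρ₁ ρ₂ : ℕ}
    (h₁ : RkCovers K (Submodule.span K (Set.range fun j : Fin n₁ => G₁ᵀ j)) ρ₁)
    (h₂ : RkCovers K (Submodule.span K (Set.range fun j : Fin n₂ => G₂ᵀ j)) ρ₂) :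
    RkCovers K (Submodule.span K
      (Set.range fun j : Fin n₁ ⊕ Fin n₂ => (Matrix.fromBlocks G₁ G' 0 G₂)ᵀ j)) (ρ₁ + ρ₂) := by
  classical
  set cols := fun j : Fin n₁ ⊕ Fin n₂ => (Matrix.fromBlocks G₁ G' 0 G₂)ᵀ j with hcolsdef
  apply FSA.rkCovers_of_families (η := Fin ρ₁ ⊕ Fin ρ₂) (by simp)
  intro v
  obtain ⟨f₂, hf₂U, hf₂v⟩ := FSA.exists_family_of_rkCovers h₂ (fun i => v (Sum.inr i))
  rw [Submodule.mem_span_range_iff_exists_fun] at hf₂v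
  obtain ⟨lam, hlam⟩ := hf₂v
  choose c hc using fun s => (Submodule.mem_span_range_iff_exists_fun K).mp (hf₂U s)
  set F₂ : Fin ρ₂ → ((Fin k₁ ⊕ Fin k₂) → L) := fun s => ∑ j, c s j • cols (Sum.inr j) with hF₂def
  have hF₂U : ∀ s, F₂ s ∈ Submodule.span K (Set.range cols) := fun s =>
    Submodule.sum_mem _ fun j _ => Submodule.smul_mem _ _ (Submodule.subset_span ⟨_, rfl⟩)
  have hF₂r : ∀ s i, F₂ s (Sum.inr i) = f₂ s i := by
    intro s i
    rw [← hc s]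
    simp only [hF₂def, Finset.sum_apply, Pi.smul_apply]
    refine Finset.sum_congr rfl fun j _ => ?_
    congr 1
  have hF₂lin : ∀ (μ : Fin ρ₂ → L) (i : Fin k₂),
      (∑ s, μ s • F₂ s) (Sum.inr i) = (∑ s, μ s • f₂ s) i := by
    intro μ i
    simp only [Finset.sum_apply, Pi.smul_apply]
    exact Finset.sum_congr rfl fun s _ => by rw [hF₂r]
  set w : (Fin k₁ ⊕ Fin k₂) → L := ∑ s, lam s • F₂ s with hwdef
  obtain ⟨f₁, hf₁U, hf₁v⟩ := FSA.exists_family_of_rkCovers h₁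
    (fun i => v (Sum.inl i) - w (Sum.inl i))
  rw [Submodule.mem_span_range_iff_exists_fun] at hf₁v
  obtain ⟨mu, hmu⟩ := hf₁v
  choose d hd using fun s => (Submodule.mem_span_range_iff_exists_fun K).mp (hf₁U s)
  set F₁ : Fin ρ₁ → ((Fin k₁ ⊕ Fin k₂) → L) := fun s => ∑ j, d s j • cols (Sum.inl j) with hF₁def
  have hF₁U : ∀ s, F₁ s ∈ Submodule.span K (Set.range cols) := fun s =>
    Submodule.sum_mem _ fun j _ => Submodule.smul_mem _ _ (Submodule.subset_span ⟨_, rfl⟩)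
  have hF₁l : ∀ s i, F₁ s (Sum.inl i) = f₁ s i := by
    intro s i
    rw [← hd s]
    simp only [hF₁def, Finset.sum_apply, Pi.smul_apply]
    refine Finset.sum_congr rfl fun j _ => ?_
    congr 1
  have hF₁r : ∀ s i, F₁ s (Sum.inr i) = 0 := by
    intro s i
    simp only [hF₁def, Finset.sum_apply, Pi.smul_apply]
    have hz : ∀ j : Fin n₁, cols (Sum.inl j) (Sum.inr i) = 0 := by
      intro j
      show (Matrix.fromBlocks G₁ G' 0 G₂)ᵀ (Sum.inl j) (Sum.inr i) = 0
      rw [Matrix.transpose_apply, Matrix.fromBlocks_apply₂₁]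
      rfl
    simp [hz]
  refine ⟨Sum.elim F₁ F₂, ?_, ?_⟩
  · rintro (s | s)
    · exact hF₁U s
    · exact hF₂U s
  · rw [Submodule.mem_span_range_iff_exists_fun]
    refine ⟨Sum.elim mu lam, ?_⟩
    rw [Fintype.sum_sum_type]
    simp only [Sum.elim_inl, Sum.elim_inr]
    funext x
    cases x with
    | inl i =>
      have h1 : (∑ s, mu s • F₁ s) (Sum.inl i) = (∑ s, mu s • f₁ s) i := by
        simp only [Finset.sum_apply, Pi.smul_apply]
        exact Finset.sum_congr rfl fun s _ => by rw [hF₁l]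
      simp only [Pi.add_apply]
      rw [h1, hmu]
      show v (Sum.inl i) - w (Sum.inl i) + w (Sum.inl i) = v (Sum.inl i)
      abel
    | inr i =>
      have h1 : (∑ s, mu s • F₁ s) (Sum.inr i) = 0 := by
        simp only [Finset.sum_apply, Pi.smul_apply]
        refine Finset.sum_eq_zero fun s _ => ?_
        rw [hF₁r, smul_zero]
      simp only [Pi.add_apply]
      rw [h1, hF₂lin lam i, hlam]
      show 0 + v (Sum.inr i) = v (Sum.inr i)
      rw [zero_add]

theorem FSA.fsum_span
    (hs₁ : Submodule.span L
      ((Submodule.span K (Set.range fun j : Fin n₁ => G₁ᵀ j) : Submodule K (Fin k₁ → L)) :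
        Set (Fin k₁ → L)) = ⊤)
    (hs₂ : Submodule.span L
      ((Submodule.span K (Set.range fun j : Fin n₂ => G₂ᵀ j) : Submodule K (Fin k₂ → L)) :
        Set (Fin k₂ → L)) = ⊤) :
    Submodule.span L ((Submodule.span K
      (Set.range fun j : Fin n₁ ⊕ Fin n₂ => (Matrix.fromBlocks G₁ G' 0 G₂)ᵀ j) :
        Submodule K ((Fin k₁ ⊕ Fin k₂) → L)) : Set ((Fin k₁ ⊕ Fin k₂) → L)) = ⊤ := by
  classical
  rw [Submodule.span_span_of_tower] at hs₁ hs₂ ⊢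
  set cols := fun j : Fin n₁ ⊕ Fin n₂ => (Matrix.fromBlocks G₁ G' 0 G₂)ᵀ j with hcolsdef
  rw [Submodule.eq_top_iff']
  intro v
  have hv₂ : (fun i => v (Sum.inr i)) ∈ Submodule.span L (Set.range fun j : Fin n₂ => G₂ᵀ j) := by
    rw [hs₂]; exact Submodule.mem_top
  rw [Submodule.mem_span_range_iff_exists_fun] at hv₂
  obtain ⟨lam, hlam⟩ := hv₂
  set w : (Fin k₁ ⊕ Fin k₂) → L := ∑ j, lam j • cols (Sum.inr j) with hwdef
  have hv₁ : (fun i => v (Sum.inl i) - w (Sum.inl i))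
      ∈ Submodule.span L (Set.range fun j : Fin n₁ => G₁ᵀ j) := by
    rw [hs₁]; exact Submodule.mem_top
  rw [Submodule.mem_span_range_iff_exists_fun] at hv₁
  obtain ⟨mu, hmu⟩ := hv₁
  rw [Submodule.mem_span_range_iff_exists_fun]
  refine ⟨Sum.elim mu lam, ?_⟩
  rw [Fintype.sum_sum_type]
  simp only [Sum.elim_inl, Sum.elim_inr]
  funext x
  cases x with
  | inl i =>
    have h1 : (∑ j, mu j • cols (Sum.inl j)) (Sum.inl i) = (∑ j, mu j • G₁ᵀ j) i := by
      simp only [Finset.sum_apply, Pi.smul_apply]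
      refine Finset.sum_congr rfl fun j _ => ?_
      congr 1
    simp only [Pi.add_apply]
    rw [h1, hmu]
    show v (Sum.inl i) - w (Sum.inl i) + w (Sum.inl i) = v (Sum.inl i)
    abel
  | inr i =>
    have h1 : (∑ j, mu j • cols (Sum.inl j)) (Sum.inr i) = 0 := by
      simp only [Finset.sum_apply, Pi.smul_apply]
      refine Finset.sum_eq_zero fun j _ => ?_
      have hz : cols (Sum.inl j) (Sum.inr i) = 0 := by
        show (Matrix.fromBlocks G₁ G' 0 G₂)ᵀ (Sum.inl j) (Sum.inr i) = 0
        rw [Matrix.transpose_apply, Matrix.fromBlocks_apply₂₁]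
        rfl
      rw [hz, smul_zero]
    have h2 : (∑ j, lam j • cols (Sum.inr j)) (Sum.inr i) = (∑ j, lam j • G₂ᵀ j) i := by
      simp only [Finset.sum_apply, Pi.smul_apply]
      refine Finset.sum_congr rfl fun j _ => ?_
      congr 1
    simp only [Pi.add_apply]
    rw [h1, h2, hlam]
    show 0 + v (Sum.inr i) = v (Sum.inr i)
    rw [zero_add]

theorem FSA.fsum_finrank
    (hcols₁ : LinearIndependent K (fun j : Fin n₁ => G₁ᵀ j))
    (hcols₂ : LinearIndependent K (fun j : Fin n₂ => G₂ᵀ j)) :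
    Module.finrank K (Submodule.span K
      (Set.range fun j : Fin n₁ ⊕ Fin n₂ => (Matrix.fromBlocks G₁ G' 0 G₂)ᵀ j)) = n₁ + n₂ := by
  classical
  set cols := fun j : Fin n₁ ⊕ Fin n₂ => (Matrix.fromBlocks G₁ G' 0 G₂)ᵀ j with hcolsdef
  have hli : LinearIndependent K cols := by
    rw [Fintype.linearIndependent_iff]
    intro g hg
    have hg2 : ∀ i : Fin k₂, (∑ j, g (Sum.inr j) • G₂ᵀ j) i = 0 := by
      intro i
      have h0 := congrFun hg (Sum.inr i)
      rw [Fintype.sum_sum_type] at h0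
      simp only [Pi.add_apply, Finset.sum_apply, Pi.smul_apply, Pi.zero_apply] at h0
      have hz : ∀ j : Fin n₁, cols (Sum.inl j) (Sum.inr i) = 0 := by
        intro j
        show (Matrix.fromBlocks G₁ G' 0 G₂)ᵀ (Sum.inl j) (Sum.inr i) = 0
        rw [Matrix.transpose_apply, Matrix.fromBlocks_apply₂₁]
        rfl
      simp only [Finset.sum_apply, Pi.smul_apply]
      rw [← h0]
      have : ∑ j : Fin n₁, g (Sum.inl j) • cols (Sum.inl j) (Sum.inr i) = 0 := by
        refine Finset.sum_eq_zero fun j _ => ?_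
        rw [hz, smul_zero]
      rw [this, zero_add]
      rfl
    have hgr : ∀ j : Fin n₂, g (Sum.inr j) = 0 := by
      have := (Fintype.linearIndependent_iff.mp hcols₂) (fun j => g (Sum.inr j)) ?_
      · exact this
      · funext i
        exact hg2 i
    have hg1 : ∀ i : Fin k₁, (∑ j, g (Sum.inl j) • G₁ᵀ j) i = 0 := by
      intro i
      have h0 := congrFun hg (Sum.inl i)
      rw [Fintype.sum_sum_type] at h0
      simp only [Pi.add_apply, Finset.sum_apply, Pi.smul_apply, Pi.zero_apply] at h0
      have hzr : ∑ j : Fin n₂, g (Sum.inr j) • cols (Sum.inr j) (Sum.inl i) = 0 := by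
        refine Finset.sum_eq_zero fun j _ => ?_
        rw [hgr j, zero_smul]
      rw [hzr, add_zero] at h0
      simp only [Finset.sum_apply, Pi.smul_apply]
      rw [← h0]
      rfl
    have hgl : ∀ j : Fin n₁, g (Sum.inl j) = 0 := by
      have := (Fintype.linearIndependent_iff.mp hcols₁) (fun j => g (Sum.inl j)) ?_
      · exact this
      · funext i
        exact hg1 i
    rintro (j | j)
    · exact hgl j
    · exact hgr j
  rw [finrank_span_eq_card hli]
  simp

end FSum

section Transport

variable {K L : Type*} [Field K] [Field L] [Algebra K L] [Fintype L]

theorem FSA.rkCovers_map {α β : Type*} [Fintype α] (E : (α → L) ≃ₗ[L] (β → L))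
    (U : Submodule K (α → L)) {r : ℕ} (h : RkCovers K U r) :
    RkCovers K (U.map ((E.restrictScalars K : (α → L) ≃ₗ[K] (β → L)) :
      (α → L) →ₗ[K] (β → L))) r := by
  haveI : Module.Finite K (α → L) := FSA.moduleFinite_of_finite K _
  intro v
  obtain ⟨S, hSU, hSr, hv⟩ := h (E.symm v)
  refine ⟨S.map ((E.restrictScalars K : (α → L) ≃ₗ[K] (β → L)) : (α → L) →ₗ[K] (β → L)),
    Submodule.map_mono hSU, le_trans (Submodule.finrank_map_le _ _) hSr, ?_⟩
  have hm : E (E.symm v) ∈ Submodule.map (E.toLinearMap)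
      (Submodule.span L (S : Set (α → L))) := Submodule.mem_map_of_mem hv
  rw [Submodule.map_span, LinearEquiv.apply_symm_apply] at hm
  have hset : ((S.map ((E.restrictScalars K : (α → L) ≃ₗ[K] (β → L)) :
      (α → L) →ₗ[K] (β → L))) : Set (β → L)) = ⇑E.toLinearMap '' (S : Set (α → L)) := rfl
  rw [hset]
  exact hm

theorem FSA.map_symm_map {α β : Type*} (E : (α → L) ≃ₗ[L] (β → L))
    (U : Submodule K (α → L)) :
    (U.map ((E.restrictScalars K : (α → L) ≃ₗ[K] (β → L)) : (α → L) →ₗ[K] (β → L))).map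
      ((E.symm.restrictScalars K : (β → L) ≃ₗ[K] (α → L)) : (β → L) →ₗ[K] (α → L)) = U := by
  rw [← Submodule.map_comp]
  have : (((E.symm.restrictScalars K : (β → L) ≃ₗ[K] (α → L)) : (β → L) →ₗ[K] (α → L)).comp
      ((E.restrictScalars K : (α → L) ≃ₗ[K] (β → L)) : (α → L) →ₗ[K] (β → L)))
      = LinearMap.id := by
    ext x
    simp
  rw [this, Submodule.map_id]

theorem FSA.isRankSat_map {α β : Type*} [Fintype α] [Fintype β]
    (E : (α → L) ≃ₗ[L] (β → L)) (U : Submodule K (α → L)) {ρ : ℕ}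
    (h : IsRankSat K U ρ) :
    IsRankSat K (U.map ((E.restrictScalars K : (α → L) ≃ₗ[K] (β → L)) :
      (α → L) →ₗ[K] (β → L))) ρ := by
  refine ⟨FSA.rkCovers_map E U h.1, ?_⟩
  intro r hr hc
  refine h.2 r hr ?_
  have := FSA.rkCovers_map E.symm _ hc
  rwa [FSA.map_symm_map] at this

theorem FSA.span_top_map {α β : Type*} (E : (α → L) ≃ₗ[L] (β → L))
    (U : Submodule K (α → L))
    (h : Submodule.span L (U : Set (α → L)) = ⊤) :
    Submodule.span L ((U.map ((E.restrictScalars K : (α → L) ≃ₗ[K] (β → L)) :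
      (α → L) →ₗ[K] (β → L))) : Set (β → L)) = ⊤ := by
  have hset : ((U.map ((E.restrictScalars K : (α → L) ≃ₗ[K] (β → L)) :
      (α → L) →ₗ[K] (β → L))) : Set (β → L)) = ⇑E.toLinearMap '' (U : Set (α → L)) := rfl
  rw [hset, ← Submodule.map_span, h, Submodule.map_top]
  exact LinearMap.range_eq_top.mpr E.surjective

theorem FSA.k_pos_not_covers_zero {k : ℕ} (hk : 0 < k) (U : Submodule K (Fin k → L)) :
    ¬ RkCovers K U 0 := by
  intro h
  haveI : Module.Finite K (Fin k → L) := FSA.moduleFinite_of_finite K _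
  obtain ⟨S, hSU, hS0, hv⟩ := h (fun _ => 1)
  have hSbot : S = ⊥ := by
    have h0 : Module.finrank K ↥S = 0 := le_antisymm hS0 (Nat.zero_le _)
    exact Submodule.finrank_eq_zero.mp h0
  rw [hSbot, Submodule.bot_coe, Submodule.span_zero_singleton] at hv
  have h1 := congrFun ((Submodule.mem_bot L).mp hv) ⟨0, hk⟩
  simp at h1

end Transport

/-- Direct sum bound. Let `G₁, G₂` be generator matrices of a rank-`ρ₁`-saturating
`[n₁,k₁]_{q^m/q}` system and a rank-`ρ₂`-saturating `[n₂,k₂]_{q^m/q}` system, and let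
`G'` be an arbitrary `k₁ × n₂` matrix over `F_{q^m}` (encoding an `F_{q^m}`-linear map
`f : F_{q^m}^{n₁} → F_{q^m}^{n₂}`). Then the `f`-sum, i.e. the system generated by the
columns of the block matrix `[[G₁, G'], [0, G₂]]`, is an `[n₁+n₂, k₁+k₂]_{q^m/q}` system
that is rank-`ρ`-saturating for some `ρ ≤ ρ₁ + ρ₂`; and if
`ρ₁ + ρ₂ ≤ min{k₁+k₂, m}`, then
`s_{q^m/q}(k₁+k₂, ρ₁+ρ₂) ≤ s_{q^m/q}(k₁, ρ₁) + s_{q^m/q}(k₂, ρ₂)`. -/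
theorem fSum_rankSat (K L : Type*) [Field K] [Field L] [Algebra K L]
    [Fintype K] [Fintype L] {k₁ k₂ n₁ n₂ ρ₁ ρ₂ : ℕ}
    (G₁ : Matrix (Fin k₁) (Fin n₁) L) (G₂ : Matrix (Fin k₂) (Fin n₂) L)
    (G' : Matrix (Fin k₁) (Fin n₂) L)
    (hcols₁ : LinearIndependent K (fun j : Fin n₁ => G₁ᵀ j))
    (hcols₂ : LinearIndependent K (fun j : Fin n₂ => G₂ᵀ j))
    (hspan₁ : Submodule.span L
      ((Submodule.span K (Set.range fun j : Fin n₁ => G₁ᵀ j) : Submodule K (Fin k₁ → L)) :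
        Set (Fin k₁ → L)) = ⊤)
    (hspan₂ : Submodule.span L
      ((Submodule.span K (Set.range fun j : Fin n₂ => G₂ᵀ j) : Submodule K (Fin k₂ → L)) :
        Set (Fin k₂ → L)) = ⊤)
    (hsat₁ : IsRankSat K (Submodule.span K (Set.range fun j : Fin n₁ => G₁ᵀ j)) ρ₁)
    (hsat₂ : IsRankSat K (Submodule.span K (Set.range fun j : Fin n₂ => G₂ᵀ j)) ρ₂) :
    (∃ ρ ≤ ρ₁ + ρ₂,
        IsRankSat K (Submodule.span K
          (Set.range fun j : Fin n₁ ⊕ Fin n₂ => (Matrix.fromBlocks G₁ G' 0 G₂)ᵀ j)) ρ ∧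
        Module.finrank K (Submodule.span K
          (Set.range fun j : Fin n₁ ⊕ Fin n₂ => (Matrix.fromBlocks G₁ G' 0 G₂)ᵀ j)) =
            n₁ + n₂ ∧
        Submodule.span L ((Submodule.span K
          (Set.range fun j : Fin n₁ ⊕ Fin n₂ => (Matrix.fromBlocks G₁ G' 0 G₂)ᵀ j) :
            Submodule K ((Fin k₁ ⊕ Fin k₂) → L)) : Set ((Fin k₁ ⊕ Fin k₂) → L)) = ⊤) ∧
      (ρ₁ + ρ₂ ≤ min (k₁ + k₂) (Module.finrank K L) →
        sMin K L (k₁ + k₂) (ρ₁ + ρ₂) ≤ sMin K L k₁ ρ₁ + sMin K L k₂ ρ₂) := by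
  classical
  constructor
  · -- Part 1
    have hcov : RkCovers K (Submodule.span K
        (Set.range fun j : Fin n₁ ⊕ Fin n₂ => (Matrix.fromBlocks G₁ G' 0 G₂)ᵀ j)) (ρ₁ + ρ₂) :=
      FSA.fsum_covers G₁ G₂ G' hsat₁.1 hsat₂.1
    obtain ⟨ρ, hρle, hρsat⟩ := FSA.exists_isRankSat_le hcov
    exact ⟨ρ, hρle, hρsat, FSA.fsum_finrank G₁ G₂ G' hcols₁ hcols₂,
      FSA.fsum_span G₁ G₂ G' hspan₁ hspan₂⟩
  · -- Part 2
    intro hmin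
    unfold sMin
    by_cases hk0 : k₁ + k₂ = 0
    · -- degenerate: ρ₁ + ρ₂ = 0
      have hρ0 : ρ₁ + ρ₂ = 0 := by
        have := hmin.trans (min_le_left _ _)
        omega
      haveI : IsEmpty (Fin (k₁ + k₂)) := ⟨fun i => absurd i.2 (by omega)⟩
      have hspanbot : Submodule.span L
          ((⊥ : Submodule K (Fin (k₁ + k₂) → L)) : Set (Fin (k₁ + k₂) → L)) = ⊤ := by
        rw [Submodule.eq_top_iff']
        intro x
        have hx : x = 0 := Subsingleton.elim x 0
        rw [hx]
        exact Submodule.zero_mem _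
      have hsatbot : IsRankSat K (⊥ : Submodule K (Fin (k₁ + k₂) → L)) (ρ₁ + ρ₂) := by
        rw [hρ0]
        constructor
        · intro v
          refine ⟨⊥, le_rfl, ?_, ?_⟩
          · simp
          · have hx : v = 0 := Subsingleton.elim v 0
            rw [hx]
            exact Submodule.zero_mem _
        · intro r hr
          exact absurd hr (by omega)
      refine le_trans (Nat.sInf_le ⟨⊥, rfl, hspanbot, hsatbot⟩) ?_
      have : Module.finrank K (⊥ : Submodule K (Fin (k₁ + k₂) → L)) = 0 := finrank_bot K _
      rw [this]
      exact Nat.zero_le _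
    · -- k₁ + k₂ ≥ 1
      have hkpos : 0 < k₁ + k₂ := Nat.pos_of_ne_zero hk0
      have hρpos : 1 ≤ ρ₁ + ρ₂ := by
        by_contra hcon
        have hρ1 : ρ₁ = 0 := by omega
        have hρ2 : ρ₂ = 0 := by omega
        have hk1 : k₁ = 0 := by
          by_contra h
          exact FSA.k_pos_not_covers_zero (Nat.pos_of_ne_zero h) _ (hρ1 ▸ hsat₁.1)
        have hk2 : k₂ = 0 := by
          by_contra h
          exact FSA.k_pos_not_covers_zero (Nat.pos_of_ne_zero h) _ (hρ2 ▸ hsat₂.1)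
        omega
      -- minimal witnesses
      have hne₁ : {n : ℕ | ∃ U : Submodule K (Fin k₁ → L),
          Module.finrank K U = n ∧ Submodule.span L (U : Set (Fin k₁ → L)) = ⊤ ∧
          IsRankSat K U ρ₁}.Nonempty :=
        ⟨n₁, Submodule.span K (Set.range fun j : Fin n₁ => G₁ᵀ j),
          by rw [finrank_span_eq_card hcols₁]; simp, hspan₁, hsat₁⟩
      have hne₂ : {n : ℕ | ∃ U : Submodule K (Fin k₂ → L),
          Module.finrank K U = n ∧ Submodule.span L (U : Set (Fin k₂ → L)) = ⊤ ∧
          IsRankSat K U ρ₂}.Nonempty :=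
        ⟨n₂, Submodule.span K (Set.range fun j : Fin n₂ => G₂ᵀ j),
          by rw [finrank_span_eq_card hcols₂]; simp, hspan₂, hsat₂⟩
      obtain ⟨U1, hU1fr, hU1span, hU1sat⟩ := Nat.sInf_mem hne₁
      obtain ⟨U2, hU2fr, hU2span, hU2sat⟩ := Nat.sInf_mem hne₂
      haveI : Module.Finite K (Fin k₁ → L) := FSA.moduleFinite_of_finite K _
      haveI : Module.Finite K (Fin k₂ → L) := FSA.moduleFinite_of_finite K _
      -- generator matrices for U1, U2
      set b₁ := Module.finBasis K ↥U1 with hb₁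
      set b₂ := Module.finBasis K ↥U2 with hb₂
      set Gm₁ : Matrix (Fin k₁) (Fin (Module.finrank K ↥U1)) L :=
        Matrix.of (fun i j => ((b₁ j : Fin k₁ → L)) i) with hGm₁
      set Gm₂ : Matrix (Fin k₂) (Fin (Module.finrank K ↥U2)) L :=
        Matrix.of (fun i j => ((b₂ j : Fin k₂ → L)) i) with hGm₂
      have hsp₁ : Submodule.span K (Set.range fun j => Gm₁ᵀ j) = U1 := by
        have hcolsfun : (fun j => Gm₁ᵀ j) = fun j => ((b₁ j : Fin k₁ → L)) := by
          funext j
          funext i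
          rfl
        rw [hcolsfun]
        exact FSA.span_range_coe_basis U1 b₁
      have hsp₂ : Submodule.span K (Set.range fun j => Gm₂ᵀ j) = U2 := by
        have hcolsfun : (fun j => Gm₂ᵀ j) = fun j => ((b₂ j : Fin k₂ → L)) := by
          funext j
          funext i
          rfl
        rw [hcolsfun]
        exact FSA.span_range_coe_basis U2 b₂
      -- product system
      set P := Submodule.span K (Set.range fun j : Fin (Module.finrank K ↥U1) ⊕
        Fin (Module.finrank K ↥U2) => (Matrix.fromBlocks Gm₁ 0 0 Gm₂)ᵀ j) with hP
      have hPcov : RkCovers K P (ρ₁ + ρ₂) := by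
        refine FSA.fsum_covers Gm₁ Gm₂ 0 ?_ ?_
        · rw [hsp₁]; exact hU1sat.1
        · rw [hsp₂]; exact hU2sat.1
      have hPspan : Submodule.span L (P : Set ((Fin k₁ ⊕ Fin k₂) → L)) = ⊤ := by
        refine FSA.fsum_span Gm₁ Gm₂ 0 ?_ ?_
        · rw [hsp₁]; exact hU1span
        · rw [hsp₂]; exact hU2span
      have hPfr : Module.finrank K P ≤ Module.finrank K ↥U1 + Module.finrank K ↥U2 := by
        have := FSA.finrank_span_range_le (K := K)
          (fun j : Fin (Module.finrank K ↥U1) ⊕ Fin (Module.finrank K ↥U2) =>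
            (Matrix.fromBlocks Gm₁ 0 0 Gm₂)ᵀ j)
        simpa using this
      -- transport to Fin (k₁ + k₂)
      set E : ((Fin k₁ ⊕ Fin k₂) → L) ≃ₗ[L] (Fin (k₁ + k₂) → L) :=
        LinearEquiv.funCongrLeft L L (finSumFinEquiv (m := k₁) (n := k₂)).symm with hE
      set P' := P.map ((E.restrictScalars K : ((Fin k₁ ⊕ Fin k₂) → L) ≃ₗ[K]
        (Fin (k₁ + k₂) → L)) : ((Fin k₁ ⊕ Fin k₂) → L) →ₗ[K] (Fin (k₁ + k₂) → L)) with hP'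
      have hP'cov : RkCovers K P' (ρ₁ + ρ₂) := FSA.rkCovers_map E P hPcov
      have hP'span : Submodule.span L (P' : Set (Fin (k₁ + k₂) → L)) = ⊤ :=
        FSA.span_top_map E P hPspan
      have hP'fr : Module.finrank K P' = Module.finrank K P :=
        LinearEquiv.finrank_map_eq (E.restrictScalars K) P
      -- achievement
      have hρk : ρ₁ + ρ₂ ≤ Fintype.card (Fin (k₁ + k₂)) := by
        simpa using hmin.trans (min_le_left _ _)
      have hρm : ρ₁ + ρ₂ ≤ Module.finrank K L := hmin.trans (min_le_right _ _)
      obtain ⟨Z, hZfr, hZspan, hZsat⟩ :=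
        FSA.exists_isRankSat_of_rkCovers hρpos hρk hρm P' hP'cov hP'span
      refine le_trans (Nat.sInf_le ⟨Z, rfl, hZspan, hZsat⟩) ?_
      have hfin : Module.finrank K Z ≤ Module.finrank K ↥U1 + Module.finrank K ↥U2 := by
        rw [← hP'fr] at hPfr
        omega
      rw [hU1fr, hU2fr] at hfin
      exact hfin
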